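/- Consider the network with M ≥ 1 cycles of six nodes each plus a root: the root owes $a to node n_{k1} for each k; node n_{k1} owes $2a to n_{k2}; nodes n_{k2},…,n_{k5} each owe $a to the next node in the cycle; node n_{k6} owes $a to n_{k1}; all external assets are zero and a > 0. Under the proportional payment mechanism with no cash injection, exactly the root and the M nodes n_{k1} are in default, so the total number of defaults is M + 1. -/

import Mathlib

/-- in the network with a root (node `0`) and `M` six-node
cycles (nodes `n_{k,j}` numbered `1 + 6k + (j−1)`, so `n_{k,1} ≡ 1 (mod 6)`
and `n_{k,6} ≡ 0 (mod 6)`): the root owes `a` to each `n_{k,1}`; `n_{k,1}`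
owes `2a` to `n_{k,2}`; `n_{k,j}` owes `a` to `n_{k,j+1}` for `j = 2,…,5`;
`n_{k,6}` owes `a` to `n_{k,1}`; all external assets are zero.  Under the
proportional payment mechanism (clearing vector = greatest fixed point),
exactly the root and the `M` nodes `n_{k,1}` default, so there are `M + 1`
defaults. -/
theorem stmt_19 (M : ℕ) (hM : 1 ≤ M) (a : ℝ) (ha : 0 < a)
    (L : Fin (6 * M + 1) → Fin (6 * M + 1) → ℝ)
    (hL : ∀ n m : Fin (6 * M + 1),
      L n m =
        if (n : ℕ) = 0 then (if (m : ℕ) % 6 = 1 then a else 0)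
        else if (n : ℕ) % 6 = 1 then (if (m : ℕ) = (n : ℕ) + 1 then 2 * a else 0)
        else if (n : ℕ) % 6 = 0 then (if (m : ℕ) + 5 = (n : ℕ) then a else 0)
        else (if (m : ℕ) = (n : ℕ) + 1 then a else 0))
    (pbar : Fin (6 * M + 1) → ℝ) (hpbar : ∀ n, pbar n = ∑ m, L n m)
    (p : Fin (6 * M + 1) → ℝ)
    (hfix : ∀ n, p n = min (pbar n)
      (∑ m, (if pbar m = 0 then 0 else L m n / pbar m) * p m))
    (hgreatest : ∀ q : Fin (6 * M + 1) → ℝ,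
      (∀ n, q n = min (pbar n)
        (∑ m, (if pbar m = 0 then 0 else L m n / pbar m) * q m)) →
      (∀ n, 0 ≤ q n) → ∀ n, q n ≤ p n) :
    (∀ n : Fin (6 * M + 1), p n < pbar n ↔ ((n : ℕ) = 0 ∨ (n : ℕ) % 6 = 1)) ∧
    {n : Fin (6 * M + 1) | p n < pbar n}.ncard = M + 1 := by
  have hN : 0 < 6 * M + 1 := by omega
  obtain ⟨z, hzv⟩ : ∃ z : Fin (6 * M + 1), (z : ℕ) = 0 := ⟨⟨0, hN⟩, rfl⟩
  -- pbar formula at nonzero nodes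
  have hpbar_ne : ∀ n : Fin (6 * M + 1), (n : ℕ) ≠ 0 →
      pbar n = if (n : ℕ) % 6 = 1 then 2 * a else a := by
    intro n hn
    have hnlt := n.isLt
    rw [hpbar]
    by_cases h1 : (n : ℕ) % 6 = 1
    · have ht : (n : ℕ) + 1 < 6 * M + 1 := by omega
      obtain ⟨t, htv⟩ : ∃ t : Fin (6 * M + 1), (t : ℕ) = (n : ℕ) + 1 :=
        ⟨⟨(n : ℕ) + 1, ht⟩, rfl⟩
      have hside : ∀ b ∈ Finset.univ, b ≠ t → L n b = 0 := by
        intro b _ hb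
        have hb' : (b : ℕ) ≠ (t : ℕ) := fun h => hb (Fin.ext h)
        rw [hL]
        split_ifs <;> first | rfl | omega
      rw [Finset.sum_eq_single_of_mem t (Finset.mem_univ t) hside, hL,
        if_neg hn, if_pos h1, if_pos htv, if_pos h1]
    · by_cases h0 : (n : ℕ) % 6 = 0
      · have h6 : 6 ≤ (n : ℕ) := by omega
        have ht : (n : ℕ) - 5 < 6 * M + 1 := by omega
        obtain ⟨t, htv⟩ : ∃ t : Fin (6 * M + 1), (t : ℕ) = (n : ℕ) - 5 :=
          ⟨⟨(n : ℕ) - 5, ht⟩, rfl⟩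
        have hside : ∀ b ∈ Finset.univ, b ≠ t → L n b = 0 := by
          intro b _ hb
          have hb' : (b : ℕ) ≠ (t : ℕ) := fun h => hb (Fin.ext h)
          rw [hL]
          split_ifs <;> first | rfl | omega
        rw [Finset.sum_eq_single_of_mem t (Finset.mem_univ t) hside, hL,
          if_neg hn, if_neg h1, if_pos h0, if_pos (by omega : (t : ℕ) + 5 = (n : ℕ)),
          if_neg h1]
      · have ht : (n : ℕ) + 1 < 6 * M + 1 := by omega
        obtain ⟨t, htv⟩ : ∃ t : Fin (6 * M + 1), (t : ℕ) = (n : ℕ) + 1 :=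
          ⟨⟨(n : ℕ) + 1, ht⟩, rfl⟩
        have hside : ∀ b ∈ Finset.univ, b ≠ t → L n b = 0 := by
          intro b _ hb
          have hb' : (b : ℕ) ≠ (t : ℕ) := fun h => hb (Fin.ext h)
          rw [hL]
          split_ifs <;> first | rfl | omega
        rw [Finset.sum_eq_single_of_mem t (Finset.mem_univ t) hside, hL,
          if_neg hn, if_neg h1, if_neg h0, if_pos htv, if_neg h1]
  -- pbar is positive everywhere
  have hone : (1 : ℕ) < 6 * M + 1 := by omega
  obtain ⟨o, hov⟩ : ∃ o : Fin (6 * M + 1), (o : ℕ) = 1 := ⟨⟨1, hone⟩, rfl⟩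
  have hpbar0 : 0 < pbar z := by
    rw [hpbar]
    have h1L : L z o = a := by
      rw [hL, if_pos hzv, if_pos (by omega : (o : ℕ) % 6 = 1)]
    have hle : a ≤ ∑ m, L z m := by
      calc a = L z o := h1L.symm
        _ ≤ ∑ m, L z m := by
          refine Finset.single_le_sum (fun m _ => ?_) (Finset.mem_univ _)
          rw [hL]
          split_ifs <;> linarith
    linarith
  have hpos : ∀ m : Fin (6 * M + 1), 0 < pbar m := by
    intro m
    by_cases hm : (m : ℕ) = 0
    · have : m = z := Fin.ext (by rw [hm, hzv])
      rw [this]; exact hpbar0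
    · rw [hpbar_ne m hm]
      split_ifs <;> linarith
  -- incoming sum at root is zero
  have hsum0 : ∀ r : Fin (6 * M + 1) → ℝ,
      (∑ m, (if pbar m = 0 then 0 else L m z / pbar m) * r m) = 0 := by
    intro r
    refine Finset.sum_eq_zero fun m _ => ?_
    have hLm : L m z = 0 := by
      rw [hL]
      have := m.isLt
      split_ifs <;> first | rfl | omega
    by_cases h : pbar m = 0 <;> simp [h, hLm]
  -- incoming sum at non-root nodes
  have key : ∀ (r : Fin (6 * M + 1) → ℝ), r z = 0 →
      ∀ n : Fin (6 * M + 1), (n : ℕ) ≠ 0 →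
      ∃ t : Fin (6 * M + 1), (t : ℕ) ≠ 0 ∧
        (((n : ℕ) % 6 = 1 ∧ (t : ℕ) = (n : ℕ) + 5) ∨
          ((n : ℕ) % 6 ≠ 1 ∧ (t : ℕ) = (n : ℕ) - 1)) ∧
        (∑ m, (if pbar m = 0 then 0 else L m n / pbar m) * r m) = r t := by
    intro r hr0 n hn
    have hnlt := n.isLt
    by_cases h1 : (n : ℕ) % 6 = 1
    · have ht : (n : ℕ) + 5 < 6 * M + 1 := by omega
      obtain ⟨t, htv⟩ : ∃ t : Fin (6 * M + 1), (t : ℕ) = (n : ℕ) + 5 :=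
        ⟨⟨(n : ℕ) + 5, ht⟩, rfl⟩
      refine ⟨t, by omega, Or.inl ⟨h1, htv⟩, ?_⟩
      have hside : ∀ b ∈ Finset.univ, b ≠ t →
          (if pbar b = 0 then 0 else L b n / pbar b) * r b = 0 := by
        intro b _ hb
        have hb' : (b : ℕ) ≠ (t : ℕ) := fun h => hb (Fin.ext h)
        by_cases hb0 : (b : ℕ) = 0
        · have : b = z := Fin.ext (by rw [hb0, hzv])
          rw [this, hr0, mul_zero]
        · have hLb : L b n = 0 := by
            rw [hL]
            have := b.isLt
            split_ifs <;> first | rfl | omega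
          by_cases h : pbar b = 0 <;> simp [h, hLb]
      rw [Finset.sum_eq_single_of_mem t (Finset.mem_univ t) hside]
      have hLt : L t n = a := by
        rw [hL]
        rw [if_neg (by omega), if_neg (by omega), if_pos (by omega),
          if_pos (by omega)]
      have hpt : pbar t = a := by
        rw [hpbar_ne t (by omega), if_neg (by omega)]
      rw [if_neg (by rw [hpt]; exact ne_of_gt ha), hLt, hpt,
        div_self (ne_of_gt ha), one_mul]
    · have hge : 2 ≤ (n : ℕ) := by omega
      have ht : (n : ℕ) - 1 < 6 * M + 1 := by omega
      obtain ⟨t, htv⟩ : ∃ t : Fin (6 * M + 1), (t : ℕ) = (n : ℕ) - 1 :=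
        ⟨⟨(n : ℕ) - 1, ht⟩, rfl⟩
      refine ⟨t, by omega, Or.inr ⟨h1, htv⟩, ?_⟩
      have hside : ∀ b ∈ Finset.univ, b ≠ t →
          (if pbar b = 0 then 0 else L b n / pbar b) * r b = 0 := by
        intro b _ hb
        have hb' : (b : ℕ) ≠ (t : ℕ) := fun h => hb (Fin.ext h)
        by_cases hb0 : (b : ℕ) = 0
        · have : b = z := Fin.ext (by rw [hb0, hzv])
          rw [this, hr0, mul_zero]
        · have hLb : L b n = 0 := by
            rw [hL]
            have := b.isLt
            split_ifs <;> first | rfl | omega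
          by_cases h : pbar b = 0 <;> simp [h, hLb]
      rw [Finset.sum_eq_single_of_mem t (Finset.mem_univ t) hside]
      by_cases h2 : (n : ℕ) % 6 = 2
      · have hLt : L t n = 2 * a := by
          rw [hL]
          rw [if_neg (by omega), if_pos (by omega), if_pos (by omega)]
        have hpt : pbar t = 2 * a := by
          rw [hpbar_ne t (by omega), if_pos (by omega)]
        rw [if_neg (by rw [hpt]; exact ne_of_gt (by linarith)), hLt, hpt,
          div_self (by positivity), one_mul]
      · have hLt : L t n = a := by
          rw [hL]
          rw [if_neg (by omega), if_neg (by omega), if_neg (by omega),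
            if_pos (by omega)]
        have hpt : pbar t = a := by
          rw [hpbar_ne t (by omega), if_neg (by omega)]
        rw [if_neg (by rw [hpt]; exact ne_of_gt ha), hLt, hpt,
          div_self (ne_of_gt ha), one_mul]
  -- candidate clearing vector
  set q : Fin (6 * M + 1) → ℝ := fun m => if (m : ℕ) = 0 then 0 else a with hqdef
  have hqz : q z = 0 := by
    show (if (z : ℕ) = 0 then (0:ℝ) else a) = 0
    rw [if_pos hzv]
  have hq : ∀ n, q n = min (pbar n)
      (∑ m, (if pbar m = 0 then 0 else L m n / pbar m) * q m) := by
    intro n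
    by_cases hn : (n : ℕ) = 0
    · have hnz : n = z := Fin.ext (by rw [hn, hzv])
      rw [hnz, hsum0 q, hqz, min_eq_right hpbar0.le]
    · obtain ⟨t, htne, _, hsum⟩ := key q hqz n hn
      have hqn : q n = a := by simp only [hqdef, hn, ↓reduceIte]
      have hqt : q t = a := by simp only [hqdef, htne, ↓reduceIte]
      rw [hqn, hsum, hqt, hpbar_ne n hn]
      split_ifs
      · rw [min_eq_right (by linarith)]
      · rw [min_self]
  have hq0 : ∀ n, 0 ≤ q n := by
    intro n
    by_cases h : (n : ℕ) = 0 <;> simp only [hqdef, h, ↓reduceIte, le_refl, ha.le]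
  have hqp := hgreatest q hq hq0
  have hppbar : ∀ n, p n ≤ pbar n := by
    intro n
    rw [hfix n]; exact min_le_left _ _
  have hp0 : p z = 0 := by
    have h1 : p z ≤ 0 := by
      rw [hfix z, hsum0 p]; exact min_le_right _ _
    have h2 : 0 ≤ p z := by
      have := hqp z
      rw [hqz] at this
      exact this
    linarith
  have hvals : ∀ n : Fin (6 * M + 1), (n : ℕ) ≠ 0 → a ≤ p n := by
    intro n hn
    have h := hqp n
    have hqn : q n = a := by simp only [hqdef, hn, ↓reduceIte]
    rw [hqn] at h
    exact h
  have hiff : ∀ n : Fin (6 * M + 1),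
      p n < pbar n ↔ ((n : ℕ) = 0 ∨ (n : ℕ) % 6 = 1) := by
    intro n
    by_cases hn : (n : ℕ) = 0
    · refine iff_of_true ?_ (Or.inl hn)
      have hnz : n = z := Fin.ext (by rw [hn, hzv])
      rw [hnz, hp0]
      exact hpbar0
    · by_cases h1 : (n : ℕ) % 6 = 1
      · refine iff_of_true ?_ (Or.inr h1)
        obtain ⟨t, htne, hcase, hsum⟩ := key p hp0 n hn
        rcases hcase with ⟨_, htv⟩ | ⟨h1', _⟩
        · have hpt : pbar t = a := by
            rw [hpbar_ne t htne, if_neg (by omega)]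
          have hle : p n ≤ p t := by
            rw [hfix n, hsum]
            exact min_le_right _ _
          have h2 : p t ≤ a := by
            have := hppbar t
            rw [hpt] at this
            exact this
          rw [hpbar_ne n hn, if_pos h1]
          linarith
        · exact absurd h1 h1'
      · refine iff_of_false ?_ (by tauto)
        rw [hpbar_ne n hn, if_neg h1]
        exact not_lt.mpr (hvals n hn)
  refine ⟨hiff, ?_⟩
  have hset : {n : Fin (6 * M + 1) | p n < pbar n} =
      ↑(Finset.univ.filter (fun n : Fin (6 * M + 1) =>
        (n : ℕ) = 0 ∨ (n : ℕ) % 6 = 1)) := by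
    ext n
    simp [hiff n]
  rw [hset, Set.ncard_coe_finset,
    show M + 1 = (Finset.range (M + 1)).card from (Finset.card_range _).symm]
  refine Finset.card_bij'
    (fun n _ => if (n : ℕ) = 0 then 0 else (n : ℕ) / 6 + 1)
    (fun k hk => ⟨if k = 0 then 0 else 6 * (k - 1) + 1, ?_⟩) ?_ ?_ ?_ ?_
  · simp only [Finset.mem_range] at hk
    split_ifs <;> omega
  · intro n hn
    simp only [Finset.mem_filter, Finset.mem_univ, true_and] at hn
    simp only [Finset.mem_range]
    have := n.isLt
    split_ifs <;> omega
  · intro k hk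
    simp only [Finset.mem_range] at hk
    simp only [Finset.mem_filter, Finset.mem_univ, true_and]
    show (if k = 0 then 0 else 6 * (k - 1) + 1) = 0 ∨
      (if k = 0 then 0 else 6 * (k - 1) + 1) % 6 = 1
    split_ifs <;> omega
  · intro n hn
    simp only [Finset.mem_filter, Finset.mem_univ, true_and] at hn
    apply Fin.ext
    show (if (if (n : ℕ) = 0 then 0 else (n : ℕ) / 6 + 1) = 0 then 0
      else 6 * ((if (n : ℕ) = 0 then 0 else (n : ℕ) / 6 + 1) - 1) + 1) = (n : ℕ)
    have := n.isLt
    rcases hn with hn0 | hn1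
    · simp [hn0]
    · have hne : (n : ℕ) ≠ 0 := by omega
      simp only [if_neg hne]
      rw [if_neg (by omega)]
      omega
  · intro k hk
    simp only [Finset.mem_range] at hk
    show (if (if k = 0 then 0 else 6 * (k - 1) + 1) = 0 then 0
      else (if k = 0 then 0 else 6 * (k - 1) + 1) / 6 + 1) = k
    rcases eq_or_ne k 0 with h | h
    · simp [h]
    · simp only [if_neg h]
      rw [if_neg (by omega)]
      omega
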